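/- arXiv:2405.08075 — 3 statements merged into one kernel-verified Lean document; each statement's English description precedes it below -/
import Mathlib

section
/- Let G be a finite p-group with abelian derived subgroup, F a field of characteristic p, and g ∈ G a non-central element with conjugacy class {ga₁, ..., ga_s} where a₁, ..., a_s ∈ [G,G]. Then p divides s, the element a₁ + ⋯ + a_s of FG commutes with g, and if p^r ≥ exponent of [G,G] then the p^r-th power of the class sum g(a₁ + ⋯ + a_s) is zero in FG. -/
/-- Frobenius for sums of pairwise commuting elements in char `p`. -/
theorem my_sum_pow_char_pow_of_commute {R : Type*} [Semiring R] (p n : ℕ) [Fact p.Prime]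
    [CharP R p] {ι : Type*} (s : Finset ι) (f : ι → R)
    (h : ∀ i ∈ s, ∀ j ∈ s, Commute (f i) (f j)) :
    (∑ i ∈ s, f i) ^ p ^ n = ∑ i ∈ s, f i ^ p ^ n := by
  induction s using Finset.cons_induction with
  | empty => simp [zero_pow (pow_ne_zero n (Fact.out : p.Prime).ne_zero)]
  | cons a s has ih =>
    rw [Finset.sum_cons, Finset.sum_cons,
      add_pow_char_pow_of_commute _ _ (Commute.sum_right _ _ _ fun j hj =>
        h a (Finset.mem_cons_self a s) j (Finset.mem_cons_of_mem hj)),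
      ih fun i hi j hj => h i (Finset.mem_cons_of_mem hi) j (Finset.mem_cons_of_mem hj)]

/-- Let G be a finite p-group with abelian derived subgroup, F a field of
characteristic p, and g a non-central element whose conjugacy class is
{g·a₁, ..., g·a_s} with all aᵢ ∈ [G,G]. Then p ∣ s, the element a₁ + ⋯ + a_s of FG
commutes with g, and if p^r is at least the exponent of [G,G], then the p^r-th power of
the class sum g·(a₁ + ⋯ + a_s) is zero in FG. -/
theorem stmt10 (p : ℕ) (hp : p.Prime) {G : Type*} [Group G] [Finite G]
    (hpG : IsPGroup p G)
    (hab : ∀ u v : commutator G, u * v = v * u)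
    (F : Type*) [Field F] [CharP F p]
    (g : G) (hg : g ∉ Subgroup.center G)
    (s : ℕ) (a : Fin s → G) (ha : ∀ i, a i ∈ commutator G)
    (hinj : Function.Injective a)
    (hclass : {h : G | IsConj g h} = Set.range fun i => g * a i)
    (r : ℕ) (hr : Monoid.exponent (commutator G) ≤ p ^ r) :
    p ∣ s ∧
    (∑ i, MonoidAlgebra.of F G (a i)) * MonoidAlgebra.of F G g =
      MonoidAlgebra.of F G g * ∑ i, MonoidAlgebra.of F G (a i) ∧
    (MonoidAlgebra.of F G g * ∑ i, MonoidAlgebra.of F G (a i)) ^ p ^ r = 0 := by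
  haveI : Fact p.Prime := ⟨hp⟩
  have hga_inj : Function.Injective fun i => g * a i :=
    fun i j hij => hinj (mul_left_cancel hij)
  -- p ∣ s
  have hdvd : p ∣ s := by
    have horb : MulAction.orbit (ConjAct G) g = {h : G | IsConj g h} := by
      ext h
      simp only [Set.mem_setOf_eq, ConjAct.mem_orbit_conjAct]
      exact isConj_comm
    have hcard : Nat.card (MulAction.orbit (ConjAct G) g) = s := by
      rw [horb, hclass, Nat.card_range_of_injective hga_inj, Nat.card_eq_fintype_card,
        Fintype.card_fin]
    have hdvdG : s ∣ Nat.card G := by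
      rw [← hcard]
      refine ⟨Nat.card (MulAction.stabilizer (ConjAct G) g), ?_⟩
      rw [← Nat.card_prod, Nat.card_congr (MulAction.orbitProdStabilizerEquivGroup (ConjAct G) g)]
      rfl
    obtain ⟨n, hn⟩ := IsPGroup.iff_card.mp hpG
    rw [hn] at hdvdG
    obtain ⟨k, hk, hks⟩ := (Nat.dvd_prime_pow hp).mp hdvdG
    rcases Nat.eq_zero_or_pos k with hk0 | hkpos
    · -- then s = 1 and g is central, contradiction
      exfalso
      apply hg
      rw [hk0, pow_zero] at hks
      have hgmem : g ∈ Set.range fun i => g * a i := by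
        rw [← hclass]; exact IsConj.refl g
      obtain ⟨i₀, hi₀⟩ := hgmem
      rw [Subgroup.mem_center_iff]
      intro x
      have hx : x * g * x⁻¹ ∈ Set.range fun i => g * a i := by
        rw [← hclass]
        exact isConj_iff.mpr ⟨x, rfl⟩
      obtain ⟨j, hj⟩ := hx
      have hji : j = i₀ := by
        subst hks; exact Subsingleton.elim _ _
      rw [hji, hi₀] at hj
      have hxg : x * g * x⁻¹ = g := hj.symm
      calc x * g = (x * g * x⁻¹) * x := by group
        _ = g * x := by rw [hxg]
    · rw [hks]; exact dvd_pow_self p hkpos.ne'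
  -- commuting
  have hmem : ∀ i, ∃ j, g * a j = a i * g := by
    intro i
    have h1 : (g * a i) ∈ {h : G | IsConj g h} := by
      rw [hclass]; exact ⟨i, rfl⟩
    have h2 : IsConj g (a i * g) := by
      refine (h1 : IsConj g (g * a i)).trans ?_
      refine isConj_iff.mpr ⟨g⁻¹, ?_⟩
      group
    have : a i * g ∈ Set.range fun j => g * a j := by rw [← hclass]; exact h2
    exact this
  let σ : Fin s → Fin s := fun i => (hmem i).choose
  have hσ : ∀ i, g * a (σ i) = a i * g := fun i => (hmem i).choose_spec
  have hσinj : Function.Injective σ := by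
    intro i j hij
    have h1 : a i * g = a j * g := by rw [← hσ i, ← hσ j, hij]
    exact hinj (mul_right_cancel h1)
  have hσbij : Function.Bijective σ := Finite.injective_iff_bijective.mp hσinj
  have hcomm : (∑ i, MonoidAlgebra.of F G (a i)) * MonoidAlgebra.of F G g =
      MonoidAlgebra.of F G g * ∑ i, MonoidAlgebra.of F G (a i) := by
    rw [Finset.sum_mul, Finset.mul_sum]
    calc ∑ i, MonoidAlgebra.of F G (a i) * MonoidAlgebra.of F G g
        = ∑ i, MonoidAlgebra.of F G g * MonoidAlgebra.of F G (a (σ i)) := by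
          refine Finset.sum_congr rfl fun i _ => ?_
          rw [← map_mul, ← map_mul, hσ i]
      _ = ∑ i, MonoidAlgebra.of F G g * MonoidAlgebra.of F G (a i) :=
          Fintype.sum_bijective σ hσbij
            (fun i => MonoidAlgebra.of F G g * MonoidAlgebra.of F G (a (σ i)))
            (fun i => MonoidAlgebra.of F G g * MonoidAlgebra.of F G (a i)) (fun i => rfl)
  refine ⟨hdvd, hcomm, ?_⟩
  -- the p^r-th power
  haveI : CharP (MonoidAlgebra F G) p := charP_of_injective_algebraMap' (A := MonoidAlgebra F G) F p
  have hq1 : ∀ i, a i ^ p ^ r = 1 := by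
    intro i
    have hpc : IsPGroup p (commutator G) := hpG.to_subgroup _
    obtain ⟨k, hk⟩ := IsPGroup.iff_card.mp hpc
    have hd : Monoid.exponent (commutator G) ∣ p ^ k := by
      rw [← hk]
      haveI : Fintype (commutator G) := Fintype.ofFinite _
      rw [Nat.card_eq_fintype_card]
      exact Group.exponent_dvd_card
    obtain ⟨m, hm, hme⟩ := (Nat.dvd_prime_pow hp).mp hd
    have hmr : m ≤ r := by
      have h2 := hr
      rw [hme] at h2
      exact (Nat.pow_le_pow_iff_right hp.one_lt).mp h2
    have hdr : Monoid.exponent (commutator G) ∣ p ^ r := by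
      rw [hme]; exact pow_dvd_pow p hmr
    obtain ⟨c, hc⟩ := hdr
    have : (⟨a i, ha i⟩ : commutator G) ^ p ^ r = 1 := by
      rw [hc, pow_mul, Monoid.pow_exponent_eq_one, one_pow]
    have := congrArg Subtype.val this
    simpa using this
  have hSpow : (∑ i, MonoidAlgebra.of F G (a i)) ^ p ^ r = 0 := by
    rw [my_sum_pow_char_pow_of_commute p r]
    · have : ∀ i : Fin s, MonoidAlgebra.of F G (a i) ^ p ^ r = 1 := by
        intro i
        rw [← map_pow, hq1 i, map_one]
      rw [Finset.sum_congr rfl fun i _ => this i]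
      simp only [Finset.sum_const, Finset.card_univ, Fintype.card_fin, nsmul_eq_mul, mul_one]
      exact (CharP.cast_eq_zero_iff (MonoidAlgebra F G) p s).mpr hdvd
    · intro i _ j _
      have h1 : a i * a j = a j * a i := by
        have := hab ⟨a i, ha i⟩ ⟨a j, ha j⟩
        exact congrArg Subtype.val this
      exact Commute.map (h1 : Commute (a i) (a j)) (MonoidAlgebra.of F G)
  have hcom : Commute (MonoidAlgebra.of F G g) (∑ i, MonoidAlgebra.of F G (a i)) := hcomm.symm
  rw [hcom.mul_pow, hSpow, mul_zero]
end

section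
/- Let G be a finite group, F a field, and Δ(G) the augmentation ideal of FG. For elements a, b ∈ 1 + Δ(G) with A = a + 1, B = b + 1, the element C = 1 + b⁻¹a⁻¹ba satisfies C ≡ (1 + A + B)[A, B] mod Δ(G)⁴, where [A,B] = AB + BA, provided char F = 2. -/
/-- The augmentation map FG → F of a group algebra. -/
noncomputable def augMap (F : Type*) [Field F] (G : Type*) [Group G] :
    MonoidAlgebra F G →ₐ[F] F :=
  MonoidAlgebra.lift F F G 1

/-- The augmentation ideal Δ(G) of FG, as an F-subspace (it is a two-sided ideal, and
its powers are taken as products of F-subspaces). -/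
noncomputable def augIdeal (F : Type*) [Field F] (G : Type*) [Group G] :
    Submodule F (MonoidAlgebra F G) :=
  LinearMap.ker (augMap F G).toLinearMap

/-- Let G be a finite group and F a field of characteristic 2. For units
a, b of FG lying in 1 + Δ(G), setting A = a + 1, B = b + 1 and C = 1 + b⁻¹a⁻¹ba, one has
C ≡ (1 + A + B)·[A,B] mod Δ(G)⁴, where [A,B] = AB + BA. -/
theorem stmt17 (F : Type*) [Field F] [CharP F 2] (G : Type*) [Group G] [Finite G]
    (a b : (MonoidAlgebra F G)ˣ)
    (ha : (a : MonoidAlgebra F G) - 1 ∈ augIdeal F G)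
    (hb : (b : MonoidAlgebra F G) - 1 ∈ augIdeal F G) :
    (1 + ((b⁻¹ * a⁻¹ * b * a : (MonoidAlgebra F G)ˣ) : MonoidAlgebra F G)) -
      (1 + ((a : MonoidAlgebra F G) + 1) + ((b : MonoidAlgebra F G) + 1)) *
        (((a : MonoidAlgebra F G) + 1) * ((b : MonoidAlgebra F G) + 1) +
          ((b : MonoidAlgebra F G) + 1) * ((a : MonoidAlgebra F G) + 1)) ∈
      augIdeal F G ^ 4 := by
  haveI : CharP (MonoidAlgebra F G) 2 :=
    charP_of_injective_algebraMap (algebraMap F (MonoidAlgebra F G)).injective 2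
  have h2 : (2 : MonoidAlgebra F G) = 0 := by
    exact_mod_cast CharP.cast_eq_zero (MonoidAlgebra F G) 2
  have h2F : (2 : F) = 0 := by
    exact_mod_cast CharP.cast_eq_zero F 2
  set α : MonoidAlgebra F G := (a : MonoidAlgebra F G) with hαdef
  set β : MonoidAlgebra F G := (b : MonoidAlgebra F G) with hβdef
  set α' : MonoidAlgebra F G := ((a⁻¹ : (MonoidAlgebra F G)ˣ) : MonoidAlgebra F G) with hα'def
  set β' : MonoidAlgebra F G := ((b⁻¹ : (MonoidAlgebra F G)ˣ) : MonoidAlgebra F G) with hβ'def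
  have hainv : α' * α = 1 := a.inv_mul
  have hbinv : β' * β = 1 := b.inv_mul
  have hmemiff : ∀ x : MonoidAlgebra F G, x ∈ augIdeal F G ↔ augMap F G x = 0 :=
    fun x => Iff.rfl
  -- augmentation values
  have hφα : augMap F G α = 1 := by
    have h := (hmemiff _).1 ha
    rw [map_sub, map_one, sub_eq_zero] at h
    exact h
  have hφβ : augMap F G β = 1 := by
    have h := (hmemiff _).1 hb
    rw [map_sub, map_one, sub_eq_zero] at h
    exact h
  have hφα' : augMap F G α' = 1 := by
    have h := congrArg (augMap F G) hainv
    rw [map_mul, map_one, hφα, mul_one] at h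
    exact h
  have hφβ' : augMap F G β' = 1 := by
    have h := congrArg (augMap F G) hbinv
    rw [map_mul, map_one, hφβ, mul_one] at h
    exact h
  -- memberships in the augmentation ideal
  have hA : α + 1 ∈ augIdeal F G := by
    rw [hmemiff, map_add, map_one, hφα]
    calc (1 : F) + 1 = 2 := by norm_num
    _ = 0 := h2F
  have hB : β + 1 ∈ augIdeal F G := by
    rw [hmemiff, map_add, map_one, hφβ]
    calc (1 : F) + 1 = 2 := by norm_num
    _ = 0 := h2F
  have hA' : α' + 1 ∈ augIdeal F G := by
    rw [hmemiff, map_add, map_one, hφα']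
    calc (1 : F) + 1 = 2 := by norm_num
    _ = 0 := h2F
  have hB' : β' + 1 ∈ augIdeal F G := by
    rw [hmemiff, map_add, map_one, hφβ']
    calc (1 : F) + 1 = 2 := by norm_num
    _ = 0 := h2F
  -- the coerced commutator
  have hcoe : ((b⁻¹ * a⁻¹ * b * a : (MonoidAlgebra F G)ˣ) : MonoidAlgebra F G)
      = β' * α' * β * α := by
    rw [Units.val_mul, Units.val_mul, Units.val_mul]
  -- algebraic identities
  have r1 : β' * α' * (α * β) = 1 := by
    rw [show β' * α' * (α * β) = β' * (α' * α) * β by noncomm_ring, hainv, mul_one, hbinv]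
  have r2 : (1 : MonoidAlgebra F G) + β' * α' * β * α = β' * α' * (α * β + β * α) := by
    rw [mul_add, r1, ← mul_assoc]
  have hK : (α + 1) * (β + 1) + (β + 1) * (α + 1) = α * β + β * α := by
    have e : (α + 1) * (β + 1) + (β + 1) * (α + 1)
        = α * β + β * α + 2 * (α + β + 1) := by noncomm_ring
    rw [e, h2, zero_mul, add_zero]
  have hF : (α' + 1) * (α + 1) + (β' + 1) * (β + 1) + (β' + 1) * (α' + 1)
      = β' * α' + 1 + (α + 1) + (β + 1) := by
    have e : (α' + 1) * (α + 1) + (β' + 1) * (β + 1) + (β' + 1) * (α' + 1)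
        = (α' * α - 1) + (β' * β - 1) + 2 * (α' + β' + 1)
          + (β' * α' + 1 + (α + 1) + (β + 1)) := by noncomm_ring
    rw [e, hainv, hbinv, sub_self, h2, zero_mul, add_zero, add_zero, zero_add]
  -- key equality
  have key : (1 + ((b⁻¹ * a⁻¹ * b * a : (MonoidAlgebra F G)ˣ) : MonoidAlgebra F G)) -
      (1 + (α + 1) + (β + 1)) * ((α + 1) * (β + 1) + (β + 1) * (α + 1))
      = ((α' + 1) * (α + 1) + (β' + 1) * (β + 1) + (β' + 1) * (α' + 1))
          * ((α + 1) * (β + 1) + (β + 1) * (α + 1)) := by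
    rw [CharTwo.sub_eq_add, hcoe, hF, hK, r2]
    noncomm_ring
  rw [key]
  have h4 : augIdeal F G ^ 4 = augIdeal F G ^ 2 * augIdeal F G ^ 2 := by
    rw [← pow_add]
  rw [h4]
  apply Submodule.mul_mem_mul
  · rw [pow_two]
    exact add_mem (add_mem (Submodule.mul_mem_mul hA' hA) (Submodule.mul_mem_mul hB' hB))
      (Submodule.mul_mem_mul hB' hA')
  · rw [pow_two]
    exact add_mem (Submodule.mul_mem_mul hA hB) (Submodule.mul_mem_mul hB hA)
end

section
/- Let G be a finite p-group with abelian derived subgroup of exponent p^ℓ and let F be a field of characteristic p. Then for every integer r ≥ ℓ, the subalgebra of Z(FG) generated by p^r-th powers equals F[℧_r(Z(G))], the group algebra of the subgroup of Z(G) generated by p^r-th powers of central elements. In particular, the relative augmentation ideal Δ(℧_r(Z(G)))·FG is invariant under all F-algebra automorphisms of FG. -/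
/-- The subgroup ℧_r(Z(G)) of G generated by p^r-th powers of central elements. -/
def agemoCenter (p : ℕ) (r : ℕ) (G : Type*) [Group G] : Subgroup G :=
  Subgroup.closure {g : G | ∃ h ∈ Subgroup.center G, g = h ^ p ^ r}

/-- The relative augmentation ideal Δ(℧_r(Z(G)))·FG, as an F-subspace of FG. -/
noncomputable def relAugIdeal (p r : ℕ) (F : Type*) [Field F] (G : Type*) [Group G] :
    Submodule F (MonoidAlgebra F G) :=
  Submodule.span F {w : MonoidAlgebra F G |
    ∃ g ∈ agemoCenter p r G, ∃ u : MonoidAlgebra F G, w = (MonoidAlgebra.of F G g - 1) * u}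

open MonoidAlgebra

section Aux
variable (F : Type*) [Field F] {G : Type*} [Group G]

/-- An element commuting with all `of g` is central. -/
lemma aux_mem_center_of_commute (y : MonoidAlgebra F G)
    (h : ∀ g : G, Commute (of F G g) y) :
    y ∈ Subalgebra.center F (MonoidAlgebra F G) := by
  rw [Subalgebra.mem_center_iff]
  intro b
  induction b using MonoidAlgebra.induction_on with
  | of g => exact (h g)
  | add f g hf hg => rw [add_mul, mul_add, hf, hg]
  | smul r f hf => rw [smul_mul_assoc, mul_smul_comm, hf]

lemma aux_of_central {h : G} (hh : h ∈ Subgroup.center G) :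
    of F G h ∈ Subalgebra.center F (MonoidAlgebra F G) := by
  apply aux_mem_center_of_commute
  intro g
  unfold Commute SemiconjBy
  rw [← map_mul, ← map_mul, (Subgroup.mem_center_iff.mp hh g)]

lemma aux_central_coeff_conj {y : MonoidAlgebra F G}
    (hy : y ∈ Subalgebra.center F (MonoidAlgebra F G)) (h x : G) :
    y.coeff (h * x * h⁻¹) = y.coeff x := by
  have hc : of F G h * y = y * of F G h := Subalgebra.mem_center_iff.mp hy (of F G h)
  have h1 : (of F G h * y).coeff (h * x) = (y * of F G h).coeff (h * x) := by rw [hc]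
  simp only [MonoidAlgebra.of_apply] at h1
  rw [MonoidAlgebra.coeff_single_mul_apply, MonoidAlgebra.coeff_mul_single_apply] at h1
  simpa [mul_assoc] using h1.symm

end Aux

section B
variable (F : Type*) [Field F] (G : Type*) [Group G] [Finite G]

/-- The conjugacy class of `g` as a Finset. -/
noncomputable def conjCl (g : G) : Finset G :=
  (Set.toFinite (MulAction.orbit (ConjAct G) g)).toFinset

variable {G}

lemma mem_conjCl {g x : G} : x ∈ conjCl G g ↔ ∃ h : G, h * g * h⁻¹ = x := by
  simp only [conjCl, Set.Finite.mem_toFinset, MulAction.mem_orbit_iff]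
  constructor
  · rintro ⟨m, rfl⟩
    exact ⟨ConjAct.ofConjAct m, by rw [ConjAct.smul_def]⟩
  · rintro ⟨h, rfl⟩
    exact ⟨ConjAct.toConjAct h, by rw [ConjAct.smul_def, ConjAct.ofConjAct_toConjAct]⟩

lemma self_mem_conjCl (g : G) : g ∈ conjCl G g :=
  mem_conjCl.mpr ⟨1, by simp⟩

variable (G) in
/-- The class sum of `g`. -/
noncomputable def classSum (g : G) : MonoidAlgebra F G :=
  ∑ x ∈ conjCl G g, of F G x

lemma conjCl_conj_mem {g x : G} (h : G) (hx : x ∈ conjCl G g) :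
    h * x * h⁻¹ ∈ conjCl G g := by
  obtain ⟨k, rfl⟩ := mem_conjCl.mp hx
  exact mem_conjCl.mpr ⟨h * k, by group⟩

lemma classSum_central (g : G) :
    classSum F G g ∈ Subalgebra.center F (MonoidAlgebra F G) := by
  apply aux_mem_center_of_commute
  intro h
  unfold Commute SemiconjBy
  unfold classSum
  rw [Finset.mul_sum, Finset.sum_mul]
  apply Finset.sum_nbij' (i := fun x => h * x * h⁻¹) (j := fun x => h⁻¹ * x * h)
  · intro a ha; exact conjCl_conj_mem h ha
  · intro a ha; simpa using conjCl_conj_mem h⁻¹ ha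
  · intro a _; group
  · intro a _; group
  · intro a _
    rw [← map_mul, ← map_mul]
    congr 1
    group

open scoped Classical in
lemma classSum_apply (g x : G) :
    (classSum F G g).coeff x = if x ∈ conjCl G g then (1 : F) else 0 := by
  classical
  unfold classSum
  rw [MonoidAlgebra.coeff_sum, Finset.sum_apply']
  simp only [MonoidAlgebra.of_apply, MonoidAlgebra.coeff_single_apply]
  rw [Finset.sum_ite_eq' (conjCl G g) x (fun _ => (1 : F))]

lemma classSum_of_central {g : G} (hg : g ∈ Subgroup.center G) :
    classSum F G g = of F G g := by
  unfold classSum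
  have hsing : conjCl G g = {g} := by
    apply Finset.eq_singleton_iff_unique_mem.mpr
    refine ⟨self_mem_conjCl g, ?_⟩
    intro x hx
    obtain ⟨h, rfl⟩ := mem_conjCl.mp hx
    rw [Subgroup.mem_center_iff.mp hg h]
    group
  rw [hsing, Finset.sum_singleton]

end B

section C
variable {p : ℕ} {G : Type*} [Group G] [Finite G] {F : Type*} [Field F]

lemma conjCl_card_dvd (hp : p.Prime) (hpG : IsPGroup p G) {g : G}
    (hg : g ∉ Subgroup.center G) : p ∣ (conjCl G g).card := by
  classical
  haveI := Fintype.ofFinite G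
  haveI : Fact p.Prime := ⟨hp⟩
  have hcard : (conjCl G g).card = Fintype.card (MulAction.orbit (ConjAct G) g) := by
    rw [conjCl, Set.Finite.card_toFinset]
  have hdvd : (conjCl G g).card ∣ Fintype.card G := by
    rw [hcard]
    exact Dvd.intro _ (MulAction.card_orbit_mul_card_stabilizer_eq_card_group (ConjAct G) g)
  obtain ⟨n, hn⟩ := IsPGroup.iff_card.mp hpG
  rw [Nat.card_eq_fintype_card] at hn
  rw [hn] at hdvd
  obtain ⟨m, _, hcm⟩ := (Nat.dvd_prime_pow hp).mp hdvd
  have hne : (conjCl G g).card ≠ 1 := by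
    intro h1
    apply hg
    rw [Subgroup.mem_center_iff]
    intro h
    have hx : h * g * h⁻¹ ∈ conjCl G g := mem_conjCl.mpr ⟨h, rfl⟩
    have hgg : g ∈ conjCl G g := self_mem_conjCl g
    obtain ⟨x, hxx⟩ := Finset.card_eq_one.mp h1
    rw [hxx, Finset.mem_singleton] at hx hgg
    have heq : h * g * h⁻¹ = g := by rw [hx, hgg]
    calc h * g = (h * g * h⁻¹) * h := by group
    _ = g * h := by rw [heq]
  have hm1 : m ≠ 0 := by
    rintro rfl
    rw [pow_zero] at hcm
    exact hne hcm
  rw [hcm]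
  exact dvd_pow_self p hm1

lemma sum_pow_char_pow_of_commute {R : Type*} [Ring R] (p n : ℕ) [Fact p.Prime] [CharP R p]
    {ι : Type*} (s : Finset ι) (f : ι → R)
    (h : ∀ i ∈ s, ∀ j ∈ s, Commute (f i) (f j)) :
    (∑ i ∈ s, f i) ^ p ^ n = ∑ i ∈ s, f i ^ p ^ n := by
  classical
  induction s using Finset.induction_on with
  | empty => simp [zero_pow (pow_ne_zero n (Fact.out : p.Prime).ne_zero)]
  | insert _ _ hx ih =>
    rename_i a s
    rw [Finset.sum_insert hx, Finset.sum_insert hx,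
      add_pow_char_pow_of_commute _ _ (Commute.sum_right _ _ _
        (fun i hi => h a (Finset.mem_insert_self a s) i (Finset.mem_insert_of_mem hi))),
      ih (fun i hi j hj => h i (Finset.mem_insert_of_mem hi) j (Finset.mem_insert_of_mem hj))]

open scoped commutatorElement in
lemma classSum_pow_eq_zero (hp : p.Prime) (hpG : IsPGroup p G)
    (hab : ∀ u v : commutator G, u * v = v * u)
    {ℓ : ℕ} (hexp : Monoid.exponent (commutator G) = p ^ ℓ)
    [CharP F p] {r : ℕ} (hr : ℓ ≤ r) {g : G} (hg : g ∉ Subgroup.center G) :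
    (classSum F G g) ^ p ^ r = 0 := by
  classical
  haveI : Fact p.Prime := ⟨hp⟩
  haveI : CharP (MonoidAlgebra F G) p :=
    charP_of_injective_algebraMap (algebraMap F (MonoidAlgebra F G)).injective p
  set K : Finset G := (conjCl G g).image (fun x => g⁻¹ * x) with hK
  have hcardK : K.card = (conjCl G g).card :=
    Finset.card_image_of_injective _ (mul_right_injective g⁻¹)
  set T : MonoidAlgebra F G := ∑ k ∈ K, of F G k with hT
  have hST : classSum F G g = of F G g * T := by
    rw [hT, Finset.mul_sum, hK,
      Finset.sum_image (by intro a _ b _ hab'; exact mul_left_cancel hab')]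
    unfold classSum
    apply Finset.sum_congr rfl
    intro x _
    rw [← map_mul]
    congr 1
    group
  have hKcomm : ∀ k ∈ K, k ∈ commutator G := by
    intro k hk
    rw [hK, Finset.mem_image] at hk
    obtain ⟨x, hx, rfl⟩ := hk
    obtain ⟨h, rfl⟩ := mem_conjCl.mp hx
    have hcom : g⁻¹ * (h * g * h⁻¹) = ⁅g⁻¹, h⁆ := by
      rw [commutatorElement_def]; group
    rw [hcom, commutator_def]
    exact Subgroup.commutator_mem_commutator (Subgroup.mem_top _) (Subgroup.mem_top _)
  have hKpow : ∀ k ∈ K, k ^ p ^ r = 1 := by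
    intro k hk
    have h1 : (⟨k, hKcomm k hk⟩ : commutator G) ^ p ^ ℓ = 1 := by
      rw [← hexp]; exact Monoid.pow_exponent_eq_one _
    have h2 : k ^ p ^ ℓ = 1 := by
      have h3 := congrArg ((commutator G).subtype) h1
      simpa using h3
    have hsplit : p ^ r = p ^ ℓ * p ^ (r - ℓ) := by
      rw [← pow_add]; congr 1; omega
    rw [hsplit, pow_mul, h2, one_pow]
  have hKc : ∀ a ∈ K, ∀ b ∈ K, Commute (of F G a) (of F G b) := by
    intro a ha b hb
    have hcm : a * b = b * a :=
      Subtype.ext_iff.mp (hab ⟨a, hKcomm a ha⟩ ⟨b, hKcomm b hb⟩)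
    unfold Commute SemiconjBy
    rw [← map_mul, ← map_mul, hcm]
  have hgT : Commute (of F G g) T := by
    have hc := Subalgebra.mem_center_iff.mp (classSum_central F g) (of F G g)
    rw [hST] at hc
    -- hc : of g * (of g * T) = (of g * T) * of g
    have h2 := congrArg (fun z => of F G g⁻¹ * z) hc
    simp only [← mul_assoc, ← map_mul, inv_mul_cancel, map_one, one_mul] at h2
    exact h2
  have key : classSum F G g ^ p ^ r = of F G (g ^ p ^ r) * ∑ k ∈ K, of F G (k ^ p ^ r) := by
    rw [hST, hgT.mul_pow, map_pow]
    congr 1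
    rw [hT, sum_pow_char_pow_of_commute p r K _ hKc]
    exact Finset.sum_congr rfl fun k _ => (map_pow _ _ _).symm
  rw [key]
  have hsum : ∑ k ∈ K, of F G (k ^ p ^ r) = (K.card : MonoidAlgebra F G) := by
    rw [Finset.sum_congr rfl (fun k hk => by rw [hKpow k hk, map_one]),
      Finset.sum_const, nsmul_eq_mul, mul_one]
  rw [hsum, hcardK]
  obtain ⟨t, ht⟩ := conjCl_card_dvd hp hpG hg
  rw [ht, Nat.cast_mul, CharP.cast_eq_zero, zero_mul, mul_zero]

end C

section D
variable {p : ℕ} {G : Type*} [Group G] [Finite G] {F : Type*} [Field F]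

lemma central_pow_mem (hp : p.Prime) (hpG : IsPGroup p G)
    (hab : ∀ u v : commutator G, u * v = v * u)
    {ℓ : ℕ} (hexp : Monoid.exponent (commutator G) = p ^ ℓ)
    [CharP F p] {r : ℕ} (hr : ℓ ≤ r) :
    ∀ (n : ℕ) (y : MonoidAlgebra F G), y.coeff.support.card ≤ n →
      y ∈ Subalgebra.center F (MonoidAlgebra F G) →
      y ^ p ^ r ∈ Algebra.adjoin F (of F G '' (agemoCenter p r G : Set G)) := by
  classical
  haveI : Fact p.Prime := ⟨hp⟩
  haveI : CharP (MonoidAlgebra F G) p :=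
    charP_of_injective_algebraMap (algebraMap F (MonoidAlgebra F G)).injective p
  intro n
  induction n with
  | zero =>
    intro y hcard _
    rw [Nat.le_zero, Finset.card_eq_zero, Finsupp.support_eq_empty, coeff_eq_zero] at hcard
    rw [hcard, zero_pow (pow_ne_zero r hp.ne_zero)]
    exact Subalgebra.zero_mem _
  | succ n ih =>
    intro y hcard hy
    rcases Finset.eq_empty_or_nonempty y.coeff.support with hemp | ⟨g, hg⟩
    · rw [Finsupp.support_eq_empty, coeff_eq_zero] at hemp
      rw [hemp, zero_pow (pow_ne_zero r hp.ne_zero)]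
      exact Subalgebra.zero_mem _
    · set α := y.coeff g with hα
      set z := y - α • classSum F G g with hz
      have hzc : z ∈ Subalgebra.center F (MonoidAlgebra F G) :=
        sub_mem hy (Subalgebra.smul_mem _ (classSum_central F g) α)
      have hzapp : ∀ x, z.coeff x = y.coeff x - α * (classSum F G g).coeff x := by
        intro x
        rw [hz, coeff_sub, Finsupp.sub_apply, coeff_smul, Finsupp.smul_apply, smul_eq_mul]
      have hsupp : z.coeff.support ⊆ y.coeff.support.erase g := by
        intro x hx
        rw [Finsupp.mem_support_iff] at hx
        by_cases hmem : x ∈ conjCl G g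
        · exfalso
          apply hx
          obtain ⟨h, rfl⟩ := mem_conjCl.mp hmem
          rw [hzapp, classSum_apply, if_pos hmem, mul_one,
            aux_central_coeff_conj F hy h g, ← hα, sub_self]
        · rw [Finset.mem_erase]
          rw [hzapp, classSum_apply, if_neg hmem, mul_zero, sub_zero] at hx
          exact ⟨fun hxg => hmem (hxg ▸ self_mem_conjCl g), Finsupp.mem_support_iff.mpr hx⟩
      have hzcard : z.coeff.support.card ≤ n := by
        have h1 := Finset.card_le_card hsupp
        have h2 := Finset.card_erase_lt_of_mem hg
        omega
      have hyz : y = z + α • classSum F G g := by rw [hz, sub_add_cancel]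
      have hcom : Commute z (α • classSum F G g) :=
        (Subalgebra.mem_center_iff.mp hzc _).symm
      rw [hyz, add_pow_char_pow_of_commute _ _ hcom]
      refine add_mem (ih z hzcard hzc) ?_
      rw [smul_pow]
      apply Subalgebra.smul_mem
      by_cases hgc : g ∈ Subgroup.center G
      · rw [classSum_of_central F hgc, ← map_pow]
        exact Algebra.subset_adjoin
          ⟨g ^ p ^ r, Subgroup.subset_closure ⟨g, hgc, rfl⟩, rfl⟩
      · rw [classSum_pow_eq_zero hp hpG hab hexp hr hgc]
        exact Subalgebra.zero_mem _

end D

/-- Let G be a finite p-group with abelian derived subgroup of exponent p^ℓ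
and F a field of characteristic p. For every r ≥ ℓ, the subalgebra of FG generated by the
p^r-th powers of central elements of FG equals the group algebra F[℧_r(Z(G))] (the
subalgebra generated by the image of ℧_r(Z(G))); in particular the relative augmentation
ideal Δ(℧_r(Z(G)))·FG is invariant under every F-algebra automorphism of FG. -/
theorem stmt18 (p : ℕ) (hp : p.Prime) {G : Type*} [Group G] [Finite G]
    (hpG : IsPGroup p G)
    (hab : ∀ u v : commutator G, u * v = v * u)
    (ℓ : ℕ) (hexp : Monoid.exponent (commutator G) = p ^ ℓ)
    (F : Type*) [Field F] [CharP F p] (r : ℕ) (hr : ℓ ≤ r) :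
    Algebra.adjoin F {w : MonoidAlgebra F G |
        ∃ y ∈ Subalgebra.center F (MonoidAlgebra F G), w = y ^ p ^ r} =
      Algebra.adjoin F (MonoidAlgebra.of F G '' (agemoCenter p r G : Set G)) ∧
    ∀ φ : MonoidAlgebra F G ≃ₐ[F] MonoidAlgebra F G,
      Submodule.map φ.toLinearMap (relAugIdeal p r F G) = relAugIdeal p r F G := by
  classical
  haveI : Fact p.Prime := ⟨hp⟩
  haveI : CharP (MonoidAlgebra F G) p :=
    charP_of_injective_algebraMap (algebraMap F (MonoidAlgebra F G)).injective p
  -- Part 1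
  have hA : Algebra.adjoin F {w : MonoidAlgebra F G |
        ∃ y ∈ Subalgebra.center F (MonoidAlgebra F G), w = y ^ p ^ r} =
      Algebra.adjoin F (MonoidAlgebra.of F G '' (agemoCenter p r G : Set G)) := by
    apply le_antisymm
    · apply Algebra.adjoin_le
      rintro w ⟨y, hy, rfl⟩
      exact central_pow_mem hp hpG hab hexp hr y.coeff.support.card y le_rfl hy
    · apply Algebra.adjoin_le
      rintro w ⟨g, hg, rfl⟩
      replace hg : g ∈ Subgroup.closure {g : G | ∃ h ∈ Subgroup.center G, g = h ^ p ^ r} := hg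
      induction hg using Subgroup.closure_induction with
      | mem x hx =>
        obtain ⟨h, hh, rfl⟩ := hx
        exact Algebra.subset_adjoin ⟨of F G h, aux_of_central F hh, map_pow _ _ _⟩
      | one => rw [map_one]; exact Subalgebra.one_mem _
      | mul x y hx hy hpx hpy => rw [map_mul]; exact mul_mem hpx hpy
      | inv x hx hpx =>
        obtain ⟨k, hk⟩ := hpG x
        have h1 : x⁻¹ = x ^ (p ^ k - 1) := by
          apply inv_eq_of_mul_eq_one_right
          rw [← pow_succ' x (p ^ k - 1),
            show p ^ k - 1 + 1 = p ^ k from by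
              have := Nat.one_le_pow k p hp.pos; omega,
            hk]
        rw [h1, map_pow]
        exact pow_mem hpx _
  refine ⟨hA, ?_⟩
  -- the agemo subgroup is central
  have hagc : agemoCenter p r G ≤ Subgroup.center G := by
    apply (Subgroup.closure_le (Subgroup.center G)).mpr
    rintro x ⟨h, hh, rfl⟩
    exact pow_mem hh _
  set I := relAugIdeal p r F G with hI
  -- I is a left ideal
  have hleft : ∀ a : MonoidAlgebra F G, ∀ x ∈ I, a * x ∈ I := by
    intro a x hx
    rw [hI, relAugIdeal] at hx ⊢
    induction hx using Submodule.span_induction with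
    | mem w hw =>
      obtain ⟨g, hg, u, rfl⟩ := hw
      have hc : a * (of F G g - 1) = (of F G g - 1) * a := by
        have h2 := Subalgebra.mem_center_iff.mp (aux_of_central F (hagc hg)) a
        rw [mul_sub, sub_mul, one_mul, mul_one, h2]
      rw [← mul_assoc, hc, mul_assoc]
      exact Submodule.subset_span ⟨g, hg, a * u, rfl⟩
    | zero => rw [mul_zero]; exact Submodule.zero_mem _
    | add x y _ _ hx hy => rw [mul_add]; exact Submodule.add_mem _ hx hy
    | smul c x _ hx => rw [mul_smul_comm]; exact Submodule.smul_mem _ _ hx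
  -- I is a right ideal
  have hright : ∀ a : MonoidAlgebra F G, ∀ x ∈ I, x * a ∈ I := by
    intro a x hx
    rw [hI, relAugIdeal] at hx ⊢
    induction hx using Submodule.span_induction with
    | mem w hw =>
      obtain ⟨g, hg, u, rfl⟩ := hw
      rw [mul_assoc]
      exact Submodule.subset_span ⟨g, hg, u * a, rfl⟩
    | zero => rw [zero_mul]; exact Submodule.zero_mem _
    | add x y _ _ hx hy => rw [add_mul]; exact Submodule.add_mem _ hx hy
    | smul c x _ hx => rw [smul_mul_assoc]; exact Submodule.smul_mem _ _ hx
  -- the augmentation map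
  set ε : MonoidAlgebra F G →ₐ[F] F := MonoidAlgebra.lift F F G 1 with hε
  have hεof : ∀ g : G, ε (of F G g) = 1 := by
    intro g; rw [hε, MonoidAlgebra.lift_of]; rfl
  -- elements of the group algebra of the agemo minus their augmentation lie in I
  have hAug : ∀ a ∈ Algebra.adjoin F (MonoidAlgebra.of F G '' (agemoCenter p r G : Set G)),
      a - algebraMap F (MonoidAlgebra F G) (ε a) ∈ I := by
    intro a ha
    induction ha using Algebra.adjoin_induction with
    | mem x hx =>
      obtain ⟨g, hg, rfl⟩ := hx
      rw [hεof, map_one]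
      exact Submodule.subset_span ⟨g, hg, 1, (mul_one _).symm⟩
    | algebraMap c =>
      rw [AlgHom.commutes]
      simp only [Algebra.algebraMap_self, RingHom.id_apply]
      rw [sub_self]
      exact Submodule.zero_mem _
    | add x y _ _ ihx ihy =>
      have h3 := Submodule.add_mem _ ihx ihy
      have h4 : x - algebraMap F (MonoidAlgebra F G) (ε x) +
          (y - algebraMap F (MonoidAlgebra F G) (ε y)) =
          x + y - algebraMap F (MonoidAlgebra F G) (ε (x + y)) := by
        rw [map_add, map_add]; abel
      rwa [h4] at h3
    | mul x y _ _ ihx ihy =>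
      have h1 : x * y - algebraMap F (MonoidAlgebra F G) (ε (x * y)) =
          x * (y - algebraMap F (MonoidAlgebra F G) (ε y)) +
          (x - algebraMap F (MonoidAlgebra F G) (ε x)) *
            algebraMap F (MonoidAlgebra F G) (ε y) := by
        rw [map_mul, map_mul, mul_sub, sub_mul, sub_add_sub_cancel]
      rw [h1]
      exact Submodule.add_mem _ (hleft x _ ihy) (hright _ _ ihx)
  -- every automorphism maps I into I
  have hkey : ∀ ψ : MonoidAlgebra F G ≃ₐ[F] MonoidAlgebra F G,
      Submodule.map ψ.toLinearMap I ≤ I := by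
    intro ψ
    -- ψ preserves the adjoin of p^r-th powers of central elements
    have hφA : ∀ a ∈ Algebra.adjoin F {w : MonoidAlgebra F G |
          ∃ y ∈ Subalgebra.center F (MonoidAlgebra F G), w = y ^ p ^ r},
        ψ a ∈ Algebra.adjoin F {w : MonoidAlgebra F G |
          ∃ y ∈ Subalgebra.center F (MonoidAlgebra F G), w = y ^ p ^ r} := by
      intro a ha
      induction ha using Algebra.adjoin_induction with
      | mem x hx =>
        obtain ⟨y, hy, rfl⟩ := hx
        apply Algebra.subset_adjoin
        refine ⟨ψ y, ?_, map_pow _ _ _⟩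
        rw [Subalgebra.mem_center_iff]
        intro b
        calc b * ψ y = ψ (ψ.symm b * y) := by rw [map_mul, AlgEquiv.apply_symm_apply]
        _ = ψ (y * ψ.symm b) := by rw [Subalgebra.mem_center_iff.mp hy (ψ.symm b)]
        _ = ψ y * b := by rw [map_mul, AlgEquiv.apply_symm_apply]
      | algebraMap c => rw [AlgEquiv.commutes]; exact Subalgebra.algebraMap_mem _ _
      | add x y _ _ hx hy => rw [map_add]; exact add_mem hx hy
      | mul x y _ _ hx hy => rw [map_mul]; exact mul_mem hx hy
    rw [hI, relAugIdeal, Submodule.map_span, Submodule.span_le]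
    rintro w' ⟨w, ⟨g, hg, u, rfl⟩, rfl⟩
    simp only [AlgEquiv.toLinearMap_apply, SetLike.mem_coe]
    have hofg : of F G g ∈ Algebra.adjoin F
        (MonoidAlgebra.of F G '' (agemoCenter p r G : Set G)) :=
      Algebra.subset_adjoin ⟨g, hg, rfl⟩
    have hψof : ψ (of F G g) ∈ Algebra.adjoin F
        (MonoidAlgebra.of F G '' (agemoCenter p r G : Set G)) := by
      rw [← hA] at hofg ⊢
      exact hφA _ hofg
    have hεψ : ε (ψ (of F G g)) = 1 := by
      obtain ⟨k, hk⟩ := hpG g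
      have hbk : (ψ (of F G g)) ^ p ^ k = 1 := by
        rw [← map_pow, ← map_pow, hk, map_one, map_one]
      have h2 : (ε (ψ (of F G g))) ^ p ^ k = 1 := by rw [← map_pow, hbk, map_one]
      have h3 : (ε (ψ (of F G g)) - 1) ^ p ^ k = 0 := by
        rw [sub_pow_char_pow, h2, one_pow, sub_self]
      have h4 := pow_eq_zero_iff (pow_ne_zero k hp.ne_zero) |>.mp h3
      exact sub_eq_zero.mp h4
    have hmem : ψ (of F G g) - 1 ∈ I := by
      have h5 := hAug _ hψof
      rwa [hεψ, map_one] at h5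
    have h6 : ψ ((of F G g - 1) * u) = (ψ (of F G g) - 1) * ψ u := by
      rw [map_mul, map_sub, map_one]
    rw [hI, relAugIdeal] at hmem
    rw [h6]
    exact hright (ψ u) _ hmem
  intro φ
  apply le_antisymm (hkey φ)
  have h2 := Submodule.map_mono (f := φ.toLinearMap) (hkey φ.symm)
  rw [← Submodule.map_comp] at h2
  have hid : φ.toLinearMap ∘ₗ φ.symm.toLinearMap = LinearMap.id := by
    ext x; simp
  rwa [hid, Submodule.map_id] at h2
end
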